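/- The identity Σ_{α=1}^{3} (−1)^α θ_{α+1}(0)·θ_{α+1}(2η)·b_α(x)·b_α(x+η) = 0 holds for all complex x and η (where defined), where b_α(x) = θ_{α+1}(2x)/θ₁(2x). -/

import Mathlib

open Complex

noncomputable def theta1 (τ z : ℂ) : ℂ :=
  ∑' k : ℤ, Complex.exp (Real.pi * Complex.I * τ * (k + 1/2)^2 +
    2 * Real.pi * Complex.I * (z + 1/2) * (k + 1/2))

noncomputable def theta2 (τ z : ℂ) : ℂ :=
  ∑' k : ℤ, Complex.exp (Real.pi * Complex.I * τ * (k + 1/2)^2 +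
    2 * Real.pi * Complex.I * z * (k + 1/2))

noncomputable def theta3 (τ z : ℂ) : ℂ :=
  ∑' k : ℤ, Complex.exp (Real.pi * Complex.I * τ * k^2 +
    2 * Real.pi * Complex.I * z * k)

noncomputable def theta4 (τ z : ℂ) : ℂ :=
  ∑' k : ℤ, Complex.exp (Real.pi * Complex.I * τ * k^2 +
    2 * Real.pi * Complex.I * (z + 1/2) * k)

/-- `th a τ z = θ_a(z|τ)` for `a = 1,2,3,4`. -/
noncomputable def th : ℕ → ℂ → ℂ → ℂ
  | 1 => theta1
  | 2 => theta2
  | 3 => theta3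
  | _ => theta4

/- Auxiliary development -/

noncomputable def E3 (τ z : ℂ) (k : ℤ) : ℂ :=
  Complex.exp (Real.pi * Complex.I * τ * k^2 + 2 * Real.pi * Complex.I * z * k)

noncomputable def E2 (τ z : ℂ) (k : ℤ) : ℂ :=
  Complex.exp (Real.pi * Complex.I * τ * (k + 1/2)^2 + 2 * Real.pi * Complex.I * z * (k + 1/2))

lemma theta3_eq (τ z : ℂ) : theta3 τ z = ∑' k : ℤ, E3 τ z k := rfl
lemma theta4_eq (τ z : ℂ) : theta4 τ z = ∑' k : ℤ, E3 τ (z + 1/2) k := rfl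
lemma theta2_eq (τ z : ℂ) : theta2 τ z = ∑' k : ℤ, E2 τ z k := rfl

lemma E3_eq_jt (τ z : ℂ) (k : ℤ) : E3 τ z k = jacobiTheta₂_term k z τ := by
  unfold E3 jacobiTheta₂_term
  congr 1
  ring

lemma E2_eq_jt (τ z : ℂ) (k : ℤ) :
    E2 τ z k = Complex.exp (Real.pi * Complex.I * τ / 4 + Real.pi * Complex.I * z) *
      jacobiTheta₂_term k (z + τ/2) τ := by
  unfold E2 jacobiTheta₂_term
  rw [← Complex.exp_add]
  congr 1
  ring

lemma summable_norm_E3 {τ : ℂ} (hτ : 0 < τ.im) (z : ℂ) :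
    Summable fun k : ℤ => ‖E3 τ z k‖ := by
  simp only [E3_eq_jt]
  exact summable_norm_iff.mpr ((summable_jacobiTheta₂_term_iff z τ).mpr hτ)

lemma summable_norm_E2 {τ : ℂ} (hτ : 0 < τ.im) (z : ℂ) :
    Summable fun k : ℤ => ‖E2 τ z k‖ := by
  simp only [E2_eq_jt, norm_mul]
  exact (summable_norm_iff.mpr ((summable_jacobiTheta₂_term_iff (z + τ/2) τ).mpr hτ)).mul_left _

abbrev Q4 : Type := (ℤ × ℤ) × (ℤ × ℤ)

lemma prod4 {f g h i : ℤ → ℂ} (hf : Summable fun k => ‖f k‖) (hg : Summable fun k => ‖g k‖)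
    (hh : Summable fun k => ‖h k‖) (hi : Summable fun k => ‖i k‖) :
    (∑' k, f k) * (∑' k, g k) * ((∑' k, h k) * (∑' k, i k)) =
      ∑' v : Q4, (f v.1.1 * g v.1.2) * (h v.2.1 * i v.2.2) := by
  rw [tsum_mul_tsum_of_summable_norm hf hg, tsum_mul_tsum_of_summable_norm hh hi,
    tsum_mul_tsum_of_summable_norm (hf.mul_norm hg) (hh.mul_norm hi)]

noncomputable def G3 (τ x η : ℂ) (v : Q4) : ℂ :=
  (E3 τ 0 v.1.1 * E3 τ (2*η) v.1.2) * (E3 τ (2*x) v.2.1 * E3 τ (2*(x+η)) v.2.2)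

noncomputable def G4 (τ x η : ℂ) (v : Q4) : ℂ :=
  (E3 τ (0 + 1/2) v.1.1 * E3 τ (2*η + 1/2) v.1.2) *
    (E3 τ (2*x + 1/2) v.2.1 * E3 τ (2*(x+η) + 1/2) v.2.2)

noncomputable def G2 (τ x η : ℂ) (v : Q4) : ℂ :=
  (E2 τ 0 v.1.1 * E2 τ (2*η) v.1.2) * (E2 τ (2*x) v.2.1 * E2 τ (2*(x+η)) v.2.2)

def oddP (w : Q4) : Q4 :=
  ((w.1.1, w.1.2), (w.2.1, 2*w.2.2 + 1 - w.1.1 - w.1.2 - w.2.1))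

def evenP (w : Q4) : Q4 :=
  ((w.1.1, w.1.2), (w.2.1, 2*w.2.2 - w.1.1 - w.1.2 - w.2.1))

lemma oddP_inj : Function.Injective oddP := by
  rintro ⟨⟨a, b⟩, c, d⟩ ⟨⟨a', b'⟩, c', d'⟩ h
  simp only [oddP, Prod.mk.injEq] at h ⊢
  omega

lemma evenP_inj : Function.Injective evenP := by
  rintro ⟨⟨a, b⟩, c, d⟩ ⟨⟨a', b'⟩, c', d'⟩ h
  simp only [evenP, Prod.mk.injEq] at h ⊢
  omega

lemma mem_range_oddP {v : Q4} (h : ¬ (v.1.1 + v.1.2 + v.2.1 + v.2.2) % 2 = 0) :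
    v ∈ Set.range oddP := by
  obtain ⟨⟨a, b⟩, c, d⟩ := v
  refine ⟨((a, b), (c, (a + b + c + d - 1)/2)), ?_⟩
  dsimp only at h
  simp only [oddP, Prod.mk.injEq]
  refine ⟨trivial, trivial, ?_⟩
  omega

lemma mem_range_evenP {v : Q4} (h : (v.1.1 + v.1.2 + v.2.1 + v.2.2) % 2 = 0) :
    v ∈ Set.range evenP := by
  obtain ⟨⟨a, b⟩, c, d⟩ := v
  refine ⟨((a, b), (c, (a + b + c + d)/2)), ?_⟩
  dsimp only at h
  simp only [evenP, Prod.mk.injEq]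
  refine ⟨trivial, trivial, ?_⟩
  omega

def alphaE : Q4 ≃ Q4 where
  toFun v := ((v.2.2 - v.1.1 - v.1.2 - v.2.1, v.2.2 + 1 - v.2.1),
              (v.2.2 + 1 - v.1.2, 2*v.2.2 + 1 - v.1.1 - v.1.2 - v.2.1))
  invFun w := ((w.1.2 + w.2.1 - w.2.2 - 1, w.2.2 - w.1.1 - w.2.1),
               (w.2.2 - w.1.1 - w.1.2, w.2.2 - w.1.1 - 1))
  left_inv := by rintro ⟨⟨a, b⟩, c, d⟩; dsimp only; simp only [Prod.mk.injEq]; omega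
  right_inv := by rintro ⟨⟨a, b⟩, c, d⟩; dsimp only; simp only [Prod.mk.injEq]; omega

def betaE : Q4 ≃ Q4 where
  toFun v := ((v.1.2 + v.2.1 - v.2.2, v.2.2 - v.1.1 - v.2.1),
              (v.2.2 - v.1.1 - v.1.2, v.2.2 - v.1.1))
  invFun w := ((w.2.2 - w.2.1 - w.1.2 - w.1.1, w.2.2 - w.2.1),
               (w.2.2 - w.1.2, 2*w.2.2 - w.2.1 - w.1.2 - w.1.1))
  left_inv := by rintro ⟨⟨a, b⟩, c, d⟩; dsimp only; simp only [Prod.mk.injEq]; omega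
  right_inv := by rintro ⟨⟨a, b⟩, c, d⟩; dsimp only; simp only [Prod.mk.injEq]; omega

lemma G4_eq (τ x η : ℂ) (v : Q4) :
    G4 τ x η v = G3 τ x η v *
      Complex.exp (Real.pi * Complex.I * ((v.1.1 + v.1.2 + v.2.1 + v.2.2 : ℤ) : ℂ)) := by
  obtain ⟨⟨a, b⟩, c, d⟩ := v
  simp only [G3, G4, E3, ← Complex.exp_add]
  congr 1
  push_cast
  ring

lemma exp_two_int (j : ℤ) : Complex.exp (Real.pi * Complex.I * ((2 * j : ℤ) : ℂ)) = 1 := by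
  rw [show (Real.pi : ℂ) * Complex.I * ((2 * j : ℤ) : ℂ) = j * (2 * Real.pi * Complex.I) by
    push_cast; ring]
  exact Complex.exp_int_mul_two_pi_mul_I j

lemma exp_odd_int (j : ℤ) : Complex.exp (Real.pi * Complex.I * ((2 * j + 1 : ℤ) : ℂ)) = -1 := by
  rw [show (Real.pi : ℂ) * Complex.I * ((2 * j + 1 : ℤ) : ℂ) =
    j * (2 * Real.pi * Complex.I) + Real.pi * Complex.I by push_cast; ring]
  rw [Complex.exp_add, Complex.exp_int_mul_two_pi_mul_I, Complex.exp_pi_mul_I]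
  ring

lemma G2_oddP (τ x η : ℂ) (w : Q4) :
    G2 τ x η (oddP w) = G3 τ x η (oddP (alphaE w)) := by
  obtain ⟨⟨a, b⟩, c, d⟩ := w
  simp only [G2, G3, E2, E3, oddP, alphaE, Equiv.coe_fn_mk, ← Complex.exp_add]
  congr 1
  push_cast
  ring

lemma G2_evenP (τ x η : ℂ) (w : Q4) :
    G2 τ x η (evenP w) = G3 τ x η (oddP (betaE w)) := by
  obtain ⟨⟨a, b⟩, c, d⟩ := w
  simp only [G2, G3, E2, E3, evenP, oddP, betaE, Equiv.coe_fn_mk, ← Complex.exp_add]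
  congr 1
  push_cast
  ring

lemma core (τ : ℂ) (hτ : 0 < τ.im) (x η : ℂ) :
    theta3 τ 0 * theta3 τ (2*η) * (theta3 τ (2*x) * theta3 τ (2*(x+η))) =
    theta2 τ 0 * theta2 τ (2*η) * (theta2 τ (2*x) * theta2 τ (2*(x+η))) +
    theta4 τ 0 * theta4 τ (2*η) * (theta4 τ (2*x) * theta4 τ (2*(x+η))) := by
  rw [theta3_eq, theta3_eq, theta3_eq, theta3_eq, theta2_eq, theta2_eq, theta2_eq, theta2_eq,
    theta4_eq, theta4_eq, theta4_eq, theta4_eq,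
    prod4 (summable_norm_E3 hτ _) (summable_norm_E3 hτ _) (summable_norm_E3 hτ _)
      (summable_norm_E3 hτ _),
    prod4 (summable_norm_E2 hτ _) (summable_norm_E2 hτ _) (summable_norm_E2 hτ _)
      (summable_norm_E2 hτ _),
    prod4 (summable_norm_E3 hτ _) (summable_norm_E3 hτ _) (summable_norm_E3 hτ _)
      (summable_norm_E3 hτ _)]
  have S3 : Summable (G3 τ x η) :=
    (((summable_norm_E3 hτ 0).mul_norm (summable_norm_E3 hτ (2*η))).mul_norm
      ((summable_norm_E3 hτ (2*x)).mul_norm (summable_norm_E3 hτ (2*(x+η))))).of_norm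
  have S4 : Summable (G4 τ x η) :=
    (((summable_norm_E3 hτ (0+1/2)).mul_norm (summable_norm_E3 hτ (2*η+1/2))).mul_norm
      ((summable_norm_E3 hτ (2*x+1/2)).mul_norm (summable_norm_E3 hτ (2*(x+η)+1/2)))).of_norm
  have S2 : Summable (G2 τ x η) :=
    (((summable_norm_E2 hτ 0).mul_norm (summable_norm_E2 hτ (2*η))).mul_norm
      ((summable_norm_E2 hτ (2*x)).mul_norm (summable_norm_E2 hτ (2*(x+η))))).of_norm
  show ∑' v, G3 τ x η v = ∑' v, G2 τ x η v + ∑' v, G4 τ x η v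
  -- Step 1: LHS - θ4 sum equals 2 ∑ G3 ∘ oddP
  have step1 : ∑' v, G3 τ x η v - ∑' v, G4 τ x η v = 2 * ∑' w, G3 τ x η (oddP w) := by
    rw [← Summable.tsum_sub S3 S4]
    rw [← oddP_inj.tsum_eq (f := fun v => G3 τ x η v - G4 τ x η v) ?_]
    · rw [← tsum_mul_left]
      congr 1
      funext w
      obtain ⟨⟨a, b⟩, c, d⟩ := w
      have : G4 τ x η (oddP ((a,b),(c,d))) = G3 τ x η (oddP ((a,b),(c,d))) * (-1) := by
        rw [G4_eq]
        congr 1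
        rw [show ((oddP ((a,b),(c,d))).1.1 + (oddP ((a,b),(c,d))).1.2 +
          (oddP ((a,b),(c,d))).2.1 + (oddP ((a,b),(c,d))).2.2) = 2*d + 1 by
            simp only [oddP]; ring]
        exact exp_odd_int d
      rw [this]
      ring
    · intro v hv
      by_cases hpar : (v.1.1 + v.1.2 + v.2.1 + v.2.2) % 2 = 0
      · exfalso
        apply hv
        obtain ⟨j, hj⟩ : ∃ j, v.1.1 + v.1.2 + v.2.1 + v.2.2 = 2 * j := ⟨(v.1.1 + v.1.2 + v.2.1 + v.2.2)/2, by omega⟩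
        show G3 τ x η v - G4 τ x η v = 0
        rw [G4_eq, hj, exp_two_int, mul_one, sub_self]
      · exact mem_range_oddP hpar
  -- Step 2: θ2 sum splits
  have step2 : ∑' v, G2 τ x η v = 2 * ∑' w, G3 τ x η (oddP w) := by
    set se : Set Q4 := {v | (v.1.1 + v.1.2 + v.2.1 + v.2.2) % 2 = 0} with hse
    have hsplit : (G2 τ x η) = se.indicator (G2 τ x η) + seᶜ.indicator (G2 τ x η) := by
      funext v
      by_cases h : v ∈ se
      · simp [Set.indicator_of_mem h, Set.indicator_of_notMem (by simp [h] : v ∉ seᶜ)]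
      · simp [Set.indicator_of_notMem h, Set.indicator_of_mem (by simpa using h : v ∈ seᶜ)]
    rw [hsplit]
    simp only [Pi.add_apply]
    rw [Summable.tsum_add (S2.indicator se) (S2.indicator seᶜ)]
    have heven : ∑' v, se.indicator (G2 τ x η) v = ∑' w, G3 τ x η (oddP w) := by
      rw [← evenP_inj.tsum_eq (f := se.indicator (G2 τ x η)) ?_]
      · rw [← (betaE.tsum_eq fun w => G3 τ x η (oddP w))]
        congr 1
        funext w
        have hmem : evenP w ∈ se := by
          obtain ⟨⟨a, b⟩, c, d⟩ := w
          simp only [hse, evenP, Set.mem_setOf_eq]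
          omega
        rw [Set.indicator_of_mem hmem, G2_evenP]
      · intro v hv
        by_cases hpar : (v.1.1 + v.1.2 + v.2.1 + v.2.2) % 2 = 0
        · exact mem_range_evenP hpar
        · exact absurd (Set.indicator_of_notMem
            (by simp only [hse, Set.mem_setOf_eq]; exact hpar) (G2 τ x η)) hv
    have hodd : ∑' v, seᶜ.indicator (G2 τ x η) v = ∑' w, G3 τ x η (oddP w) := by
      rw [← oddP_inj.tsum_eq (f := seᶜ.indicator (G2 τ x η)) ?_]
      · rw [← (alphaE.tsum_eq fun w => G3 τ x η (oddP w))]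
        congr 1
        funext w
        have hmem : oddP w ∈ seᶜ := by
          obtain ⟨⟨a, b⟩, c, d⟩ := w
          simp only [hse, oddP, Set.mem_compl_iff, Set.mem_setOf_eq]
          omega
        rw [Set.indicator_of_mem hmem, G2_oddP]
      · intro v hv
        by_cases hpar : (v.1.1 + v.1.2 + v.2.1 + v.2.2) % 2 = 0
        · exact absurd (Set.indicator_of_notMem (by simpa [hse] using hpar) _) hv
        · exact mem_range_oddP hpar
    rw [heven, hodd]
    ring
  rw [step2]
  linear_combination step1

theorem sum_b_identity_zero (τ : ℂ) (hτ : 0 < τ.im) (x η : ℂ)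
    (h1 : theta1 τ (2*x) ≠ 0) (h2 : theta1 τ (2*(x+η)) ≠ 0) :
    ∑ α ∈ Finset.Icc 1 3, (-1 : ℂ)^α * th (α+1) τ 0 * th (α+1) τ (2*η) *
        (th (α+1) τ (2*x) / theta1 τ (2*x)) *
        (th (α+1) τ (2*(x+η)) / theta1 τ (2*(x+η))) = 0 := by
  have key := core τ hτ x η
  rw [show (Finset.Icc 1 3 : Finset ℕ) = {1, 2, 3} from rfl]
  rw [Finset.sum_insert (by decide), Finset.sum_insert (by decide), Finset.sum_singleton]
  show (-1 : ℂ)^1 * theta2 τ 0 * theta2 τ (2*η) * (theta2 τ (2*x) / theta1 τ (2*x)) *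
      (theta2 τ (2*(x+η)) / theta1 τ (2*(x+η))) +
    ((-1 : ℂ)^2 * theta3 τ 0 * theta3 τ (2*η) * (theta3 τ (2*x) / theta1 τ (2*x)) *
      (theta3 τ (2*(x+η)) / theta1 τ (2*(x+η))) +
    (-1 : ℂ)^3 * theta4 τ 0 * theta4 τ (2*η) * (theta4 τ (2*x) / theta1 τ (2*x)) *
      (theta4 τ (2*(x+η)) / theta1 τ (2*(x+η)))) = 0
  field_simp
  linear_combination key
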